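/- Let a₁, a₂ ∈ ℝ be nonzero with a₁⁻¹ − a₂⁻¹ = 1, and let α, β, λ, μ, θ : ℝ² → ℝ be twice continuously differentiable functions satisfying at every point of ℝ² the linear system: ∂α/∂u = λ·cosh θ, ∂α/∂v = μ·sinh θ, ∂β/∂u = λ·sinh θ, ∂β/∂v = μ·cosh θ, ∂λ/∂u = −cosh θ·(α/a₁) + sinh θ·(β/a₂) + μ·∂θ/∂v, ∂λ/∂v = μ·∂θ/∂u, ∂μ/∂u = λ·∂θ/∂v, ∂μ/∂v = sinh θ·(α/a₁) − cosh θ·(β/a₂) + λ·∂θ/∂u. Then at every point where μ ≠ 0, the function θ satisfies the hyperbolic sinh-Gordon equation ∂²θ/∂v² − ∂²θ/∂u² = cosh θ · sinh θ. -/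

import Mathlib

/-- Partial derivative with respect to the first variable `u`. -/
noncomputable def pdu (f : ℝ × ℝ → ℝ) (p : ℝ × ℝ) : ℝ :=
  deriv (fun u => f (u, p.2)) p.1

/-- Partial derivative with respect to the second variable `v`. -/
noncomputable def pdv (f : ℝ × ℝ → ℝ) (p : ℝ × ℝ) : ℝ :=
  deriv (fun v => f (p.1, v)) p.2

lemma hasDerivAt_sliceU (p : ℝ × ℝ) :
    HasDerivAt (fun u : ℝ => (u, p.2)) ((1 : ℝ), (0 : ℝ)) p.1 :=
  HasDerivAt.prodMk (hasDerivAt_id p.1) (hasDerivAt_const p.1 p.2)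

lemma hasDerivAt_sliceV (p : ℝ × ℝ) :
    HasDerivAt (fun v : ℝ => (p.1, v)) ((0 : ℝ), (1 : ℝ)) p.2 :=
  HasDerivAt.prodMk (hasDerivAt_const p.2 p.1) (hasDerivAt_id p.2)

lemma pdu_eq_fderiv {f : ℝ × ℝ → ℝ} {p : ℝ × ℝ} (hf : DifferentiableAt ℝ f p) :
    pdu f p = fderiv ℝ f p (1, 0) :=
  (hf.hasFDerivAt.comp_hasDerivAt p.1 (hasDerivAt_sliceU p)).deriv

lemma pdv_eq_fderiv {f : ℝ × ℝ → ℝ} {p : ℝ × ℝ} (hf : DifferentiableAt ℝ f p) :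
    pdv f p = fderiv ℝ f p (0, 1) :=
  (hf.hasFDerivAt.comp_hasDerivAt p.2 (hasDerivAt_sliceV p)).deriv

lemma contDiff_pdu {f : ℝ × ℝ → ℝ} (hf : ContDiff ℝ 2 f) : ContDiff ℝ 1 (pdu f) := by
  have : pdu f = fun p => fderiv ℝ f p (1, 0) := by
    funext p
    exact pdu_eq_fderiv ((hf.differentiable two_ne_zero) p)
  rw [this]
  exact (hf.fderiv_right (le_refl 2)).clm_apply contDiff_const

lemma contDiff_pdv {f : ℝ × ℝ → ℝ} (hf : ContDiff ℝ 2 f) : ContDiff ℝ 1 (pdv f) := by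
  have : pdv f = fun p => fderiv ℝ f p (0, 1) := by
    funext p
    exact pdv_eq_fderiv ((hf.differentiable two_ne_zero) p)
  rw [this]
  exact (hf.fderiv_right (le_refl 2)).clm_apply contDiff_const

lemma fderiv_apply_vec {f : ℝ × ℝ → ℝ} {p : ℝ × ℝ} (hf : ContDiff ℝ 2 f)
    (v w : ℝ × ℝ) :
    fderiv ℝ (fun q => fderiv ℝ f q v) p w = fderiv ℝ (fderiv ℝ f) p w v := by
  have h2 : DifferentiableAt ℝ (fderiv ℝ f) p :=
    ((hf.fderiv_right (le_refl 2)).differentiable one_ne_zero) p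
  have h := ((ContinuousLinearMap.apply ℝ ℝ v).hasFDerivAt.comp p h2.hasFDerivAt).fderiv
  rw [show (fun q => fderiv ℝ f q v) = (⇑(ContinuousLinearMap.apply ℝ ℝ v) ∘ fderiv ℝ f)
    from rfl, h]
  rfl

lemma pdu_pdv_comm {f : ℝ × ℝ → ℝ} (hf : ContDiff ℝ 2 f) (p : ℝ × ℝ) :
    pdu (pdv f) p = pdv (pdu f) p := by
  have hdiff : Differentiable ℝ f := hf.differentiable two_ne_zero
  have hpdve : pdv f = fun q => fderiv ℝ f q (0, 1) := by
    funext q; exact pdv_eq_fderiv (hdiff q)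
  have hpdue : pdu f = fun q => fderiv ℝ f q (1, 0) := by
    funext q; exact pdu_eq_fderiv (hdiff q)
  have h1 : pdu (pdv f) p = fderiv ℝ (fderiv ℝ f) p (1, 0) (0, 1) := by
    rw [pdu_eq_fderiv ((contDiff_pdv hf).differentiable one_ne_zero p),
      hpdve, fderiv_apply_vec hf]
  have h2 : pdv (pdu f) p = fderiv ℝ (fderiv ℝ f) p (0, 1) (1, 0) := by
    rw [pdv_eq_fderiv ((contDiff_pdu hf).differentiable one_ne_zero p),
      hpdue, fderiv_apply_vec hf]
  rw [h1, h2]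
  exact (hf.contDiffAt.isSymmSndFDerivAt (by norm_num)) _ _

lemma hasDerivAtU {f : ℝ × ℝ → ℝ} {p : ℝ × ℝ} (hf : DifferentiableAt ℝ f p) :
    HasDerivAt (fun u => f (u, p.2)) (pdu f p) p.1 :=
  (hf.comp p.1 (hasDerivAt_sliceU p).differentiableAt).hasDerivAt

lemma hasDerivAtV {f : ℝ × ℝ → ℝ} {p : ℝ × ℝ} (hf : DifferentiableAt ℝ f p) :
    HasDerivAt (fun v => f (p.1, v)) (pdv f p) p.2 :=
  (hf.comp p.2 (hasDerivAt_sliceV p).differentiableAt).hasDerivAt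


/-- The hyperbolic sinh-Gordon equation is the compatibility condition of the linear
system governing real deformations of the real hyperbolic paraboloid preserving a
common conjugate system: if `α, β, λ, μ, θ` satisfy the linear system everywhere, then
at every point where `μ ≠ 0` one has `∂²θ/∂v² − ∂²θ/∂u² = cosh θ · sinh θ`. -/
theorem linear_system_implies_hyperbolic_sinhGordon
    (a₁ a₂ : ℝ) (ha₁ : a₁ ≠ 0) (ha₂ : a₂ ≠ 0) (ha : a₁⁻¹ - a₂⁻¹ = 1)
    (al be lam mu th : ℝ × ℝ → ℝ)
    (hal : ContDiff ℝ 2 al) (hbe : ContDiff ℝ 2 be) (hlam : ContDiff ℝ 2 lam)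
    (hmu : ContDiff ℝ 2 mu) (hth : ContDiff ℝ 2 th)
    (hau : ∀ p : ℝ × ℝ, pdu al p = lam p * Real.cosh (th p))
    (hav : ∀ p : ℝ × ℝ, pdv al p = mu p * Real.sinh (th p))
    (hbu : ∀ p : ℝ × ℝ, pdu be p = lam p * Real.sinh (th p))
    (hbv : ∀ p : ℝ × ℝ, pdv be p = mu p * Real.cosh (th p))
    (hlu : ∀ p : ℝ × ℝ, pdu lam p =
      -Real.cosh (th p) * (al p / a₁) + Real.sinh (th p) * (be p / a₂) + mu p * pdv th p)
    (hlv : ∀ p : ℝ × ℝ, pdv lam p = mu p * pdu th p)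
    (hmuu : ∀ p : ℝ × ℝ, pdu mu p = lam p * pdv th p)
    (hmuv : ∀ p : ℝ × ℝ, pdv mu p =
      Real.sinh (th p) * (al p / a₁) - Real.cosh (th p) * (be p / a₂) + lam p * pdu th p) :
    ∀ p : ℝ × ℝ, mu p ≠ 0 →
      pdv (pdv th) p - pdu (pdu th) p = Real.cosh (th p) * Real.sinh (th p) := by
  intro p hmu0
  have dal : DifferentiableAt ℝ al p := (hal.differentiable two_ne_zero) p
  have dbe : DifferentiableAt ℝ be p := (hbe.differentiable two_ne_zero) p
  have dmu : DifferentiableAt ℝ mu p := (hmu.differentiable two_ne_zero) p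
  have dth : DifferentiableAt ℝ th p := (hth.differentiable two_ne_zero) p
  have dthu : DifferentiableAt ℝ (pdu th) p := ((contDiff_pdu hth).differentiable one_ne_zero) p
  have dthv : DifferentiableAt ℝ (pdv th) p := ((contDiff_pdv hth).differentiable one_ne_zero) p
  -- ∂u of (∂v λ) = ∂u(μ ∂u θ)
  have hC : pdu (pdv lam) p = pdu mu p * pdu th p + mu p * pdu (pdu th) p := by
    have h1 : pdv lam = fun q => mu q * pdu th q := funext hlv
    rw [h1]
    exact ((hasDerivAtU dmu).mul (hasDerivAtU dthu)).deriv
  -- ∂v of (∂u λ)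
  have hB : pdv (pdu lam) p =
      (-(Real.sinh (th (p.1, p.2)) * pdv th p) * (al p / a₁) +
        -Real.cosh (th (p.1, p.2)) * (pdv al p / a₁)) +
      ((Real.cosh (th (p.1, p.2)) * pdv th p) * (be p / a₂) +
        Real.sinh (th (p.1, p.2)) * (pdv be p / a₂)) +
      (pdv mu p * pdv th p + mu p * pdv (pdv th) p) := by
    have h1 : pdu lam = fun q =>
        -Real.cosh (th q) * (al q / a₁) + Real.sinh (th q) * (be q / a₂) +
          mu q * pdv th q := funext hlu
    rw [h1]
    exact ((((hasDerivAtV dth).cosh.neg.mul ((hasDerivAtV dal).div_const a₁)).add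
      ((hasDerivAtV dth).sinh.mul ((hasDerivAtV dbe).div_const a₂))).add
      ((hasDerivAtV dmu).mul (hasDerivAtV dthv))).deriv
  have hsym : pdu (pdv lam) p = pdv (pdu lam) p := pdu_pdv_comm hlam p
  rw [hC, hB] at hsym
  simp only [Prod.mk.eta] at hsym
  rw [hmuu p, hav p, hbv p, hmuv p] at hsym
  apply mul_left_cancel₀ hmu0
  linear_combination -hsym +
    (mu p * Real.cosh (th p) * Real.sinh (th p)) * ha
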